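/- Let F be a finite-dimensional real inner product space, Ω ⊆ ℝ^N open, Γ : Ω → L(ℝ^N, o(F)) a continuous connection form, γ : [0,1] → Ω a C¹ path, and U : Ω → F a C¹ map. Let Q : [0,1] → L(F,F) satisfy Q'(t) = Q(t) ∘ Γ(γ(t))[γ'(t)] for all t ∈ [0,1] and Q(1) = id_F (so Q(t) = Pt^Γ_γ(t)⁻¹). Then U(γ(1)) = Q(0)(U(γ(0))) + ∫₀¹ Q(t)(D_Γ U(γ(t))[γ'(t)]) dt (gauge-covariant fundamental theorem of calculus). -/

import Mathlib

open Set intervalIntegral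
open scoped RealInnerProductSpace

/-- Gauge-covariant fundamental theorem of calculus:
`U(γ(1)) = Q(0)(U(γ(0))) + ∫₀¹ Q(t)(D_Γ U(γ(t))[γ'(t)]) dt`, where `Q = (Pt^Γ_γ)⁻¹`
solves `Q' = Q ∘ Γ(γ(t))[γ'(t)]`, `Q(1) = id`. -/
theorem gauge_covariant_ftc
    {F : Type*} [NormedAddCommGroup F] [InnerProductSpace ℝ F] [FiniteDimensional ℝ F]
    {N : ℕ}
    (Ω : Set (EuclideanSpace ℝ (Fin N))) (hΩ : IsOpen Ω)
    (Γ : EuclideanSpace ℝ (Fin N) → EuclideanSpace ℝ (Fin N) →L[ℝ] F →L[ℝ] F)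
    (hΓcont : ContinuousOn Γ Ω)
    (hskew : ∀ x ∈ Ω, ∀ (v : EuclideanSpace ℝ (Fin N)) (u w : F),
      ⟪(Γ x v) u, w⟫ = -⟪u, (Γ x v) w⟫)
    -- the C¹ path γ
    (γ γ' : ℝ → EuclideanSpace ℝ (Fin N))
    (hγΩ : ∀ t ∈ Icc (0:ℝ) 1, γ t ∈ Ω)
    (hγ : ∀ t ∈ Icc (0:ℝ) 1, HasDerivWithinAt γ (γ' t) (Icc (0:ℝ) 1) t)
    (hγ'cont : ContinuousOn γ' (Icc (0:ℝ) 1))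
    -- the C¹ map U with derivative DU
    (U : EuclideanSpace ℝ (Fin N) → F)
    (DU : EuclideanSpace ℝ (Fin N) → EuclideanSpace ℝ (Fin N) →L[ℝ] F)
    (hU : ∀ x ∈ Ω, HasFDerivAt U (DU x) x)
    (hDUcont : ContinuousOn DU Ω)
    -- the inverse parallel transport Q
    (Q : ℝ → F →L[ℝ] F)
    (hQ : ∀ t ∈ Icc (0:ℝ) 1,
      HasDerivWithinAt Q ((Q t).comp ((Γ (γ t)) (γ' t))) (Icc (0:ℝ) 1) t)
    (hQ1 : Q 1 = ContinuousLinearMap.id ℝ F) :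
    U (γ 1) = (Q 0) (U (γ 0)) +
      ∫ t in (0:ℝ)..1, (Q t) ((DU (γ t)) (γ' t) + ((Γ (γ t)) (γ' t)) (U (γ t))) := by
  set g : ℝ → F := fun t => Q t (U (γ t)) with hg
  set f' : ℝ → F := fun t => Q t ((DU (γ t)) (γ' t) + ((Γ (γ t)) (γ' t)) (U (γ t))) with hf'
  have hγcont : ContinuousOn γ (Icc (0:ℝ) 1) := fun t ht => (hγ t ht).continuousWithinAt
  have hUcontΩ : ContinuousOn U Ω := fun x hx => (hU x hx).continuousAt.continuousWithinAt
  have hmaps : MapsTo γ (Icc (0:ℝ) 1) Ω := fun t ht => hγΩ t ht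
  have hderiv : ∀ t ∈ Icc (0:ℝ) 1, HasDerivWithinAt g (f' t) (Icc (0:ℝ) 1) t := by
    intro t ht
    have hu : HasDerivWithinAt (fun s => U (γ s)) ((DU (γ t)) (γ' t)) (Icc (0:ℝ) 1) t :=
      (hU (γ t) (hγΩ t ht)).comp_hasDerivWithinAt t (hγ t ht)
    have := (hQ t ht).clm_apply hu
    simpa [hf', map_add, add_comm] using this
  have hgcont : ContinuousOn g (Icc (0:ℝ) 1) :=
    fun t ht => (hderiv t ht).continuousWithinAt
  have hQcont : ContinuousOn Q (Icc (0:ℝ) 1) := fun t ht => (hQ t ht).continuousWithinAt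
  have hf'cont : ContinuousOn f' (Icc (0:ℝ) 1) := by
    apply hQcont.clm_apply
    exact ((hDUcont.comp hγcont hmaps).clm_apply hγ'cont).add
      (((hΓcont.comp hγcont hmaps).clm_apply hγ'cont).clm_apply (hUcontΩ.comp hγcont hmaps))
  have hint : IntervalIntegrable f' MeasureTheory.volume 0 1 := by
    apply ContinuousOn.intervalIntegrable
    rwa [uIcc_of_le (by norm_num : (0:ℝ) ≤ 1)]
  have hderiv' : ∀ t ∈ Ioo (0:ℝ) 1, HasDerivWithinAt g (f' t) (Ioi t) t := by
    intro t ht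
    exact (hderiv t (Ioo_subset_Icc_self ht)).mono_of_mem_nhdsWithin
      (Icc_mem_nhdsGT_of_mem (by exact ⟨le_of_lt ht.1, ht.2⟩))
  have key := intervalIntegral.integral_eq_sub_of_hasDeriv_right_of_le
    (by norm_num : (0:ℝ) ≤ 1) hgcont hderiv' hint
  have hg1 : g 1 = U (γ 1) := by simp [hg, hQ1]
  have hg0 : g 0 = Q 0 (U (γ 0)) := rfl
  rw [key, hg1, hg0]
  abel
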